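/- Let α ≥ 1, 0 < β < 1, and M > 0 be real numbers. For all real x > 0 and y > 0, the inequality β·y / (α·x + y)² > M holds if and only if 0 < x < β/(4αM) and γ₁ − γ₂ < y < γ₁ + γ₂, where γ₁ = (β − 2αMx)/(2M) and γ₂ = √( β(β − 4αMx) ) / (2M). -/

import Mathlib

/-- Equation (12): characterization of the `M`-sensitive region
`Ω_M(p(ω), p(ω_uv))` of the `K`-tuple Plackett–Luce model, with
`γ₁ = (β − 2αMx)/(2M)` and `γ₂ = √(β(β − 4αMx))/(2M)`. -/
theorem stmt_12 (α β M : ℝ) (hα : 1 ≤ α) (hβ0 : 0 < β) (hβ1 : β < 1) (hM : 0 < M) :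
    ∀ x > (0 : ℝ), ∀ y > (0 : ℝ),
      (β * y / (α * x + y) ^ 2 > M ↔
        (0 < x ∧ x < β / (4 * α * M) ∧
          (β - 2 * α * M * x) / (2 * M) - Real.sqrt (β * (β - 4 * α * M * x)) / (2 * M) < y ∧
          y < (β - 2 * α * M * x) / (2 * M) + Real.sqrt (β * (β - 4 * α * M * x)) / (2 * M))) := by
  intro x hx y hy
  have hα0 : (0:ℝ) < α := lt_of_lt_of_le one_pos hα
  have hs : 0 < α * x + y := by positivity
  have h2M : (0:ℝ) < 2 * M := by linarith
  constructor
  · intro h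
    rw [gt_iff_lt, lt_div_iff₀ (by positivity)] at h
    have hineq : M * y ^ 2 - (β - 2 * α * M * x) * y + M * (α * x) ^ 2 < 0 := by nlinarith
    have hDpos : 0 < β * (β - 4 * α * M * x) := by
      nlinarith [sq_nonneg (2 * M * y - (β - 2 * α * M * x))]
    have hsD : Real.sqrt (β * (β - 4 * α * M * x)) ^ 2 = β * (β - 4 * α * M * x) :=
      Real.sq_sqrt hDpos.le
    have hsDpos : 0 < Real.sqrt (β * (β - 4 * α * M * x)) := Real.sqrt_pos.2 hDpos
    have hkey : (2 * M * y - (β - 2 * α * M * x)) ^ 2 < β * (β - 4 * α * M * x) := by nlinarith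
    have h1 : (β - 2 * α * M * x) - Real.sqrt (β * (β - 4 * α * M * x)) < 2 * M * y := by
      nlinarith [sq_nonneg (2 * M * y - (β - 2 * α * M * x) + Real.sqrt (β * (β - 4 * α * M * x)))]
    have h2 : 2 * M * y < (β - 2 * α * M * x) + Real.sqrt (β * (β - 4 * α * M * x)) := by
      nlinarith [sq_nonneg ((β - 2 * α * M * x) - 2 * M * y + Real.sqrt (β * (β - 4 * α * M * x)))]
    refine ⟨hx, ?_, ?_, ?_⟩
    · rw [lt_div_iff₀ (by positivity)]
      nlinarith
    · rw [div_sub_div_same, div_lt_iff₀ h2M]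
      linarith
    · rw [← add_div, lt_div_iff₀ h2M]
      linarith
  · rintro ⟨-, hx2, h1, h2⟩
    rw [lt_div_iff₀ (by positivity)] at hx2
    have hDpos : 0 < β * (β - 4 * α * M * x) := by nlinarith
    have hsD : Real.sqrt (β * (β - 4 * α * M * x)) ^ 2 = β * (β - 4 * α * M * x) :=
      Real.sq_sqrt hDpos.le
    have hsDpos : 0 < Real.sqrt (β * (β - 4 * α * M * x)) := Real.sqrt_pos.2 hDpos
    rw [div_sub_div_same, div_lt_iff₀ h2M] at h1
    rw [← add_div, lt_div_iff₀ h2M] at h2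
    have hkey : (2 * M * y - (β - 2 * α * M * x)) ^ 2 < β * (β - 4 * α * M * x) := by nlinarith
    rw [gt_iff_lt, lt_div_iff₀ (by positivity)]
    nlinarith
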